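/- Let a > b > 0 with 3a² > 4b², and c = √(a² − b²) with 2c > a. Define P₁ = (0, b), P₄ = (0, −b), P₂ = (−a^{3/2}√(2c − a)/c, (c − a)b/c), P₃ = −P₂, P₅ = (−a^{3/2}√(2c − a)/c, −(c − a)b/c), P₆ = −P₅. Then each Pᵢ lies on the ellipse x²/a² + y²/b² = 1 and the perimeter of the closed polygon P₁P₂P₃P₄P₅P₆ equals 4(a + c)√(2a/c − 1). -/

import Mathlib

/-- Euclidean distance between two points of the plane. -/
noncomputable def edist' (p q : ℝ × ℝ) : ℝ :=
  Real.sqrt ((p.1 - q.1)^2 + (p.2 - q.2)^2)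

/-- The type-II self-intersected billiard 6-periodic: its vertices lie on the
ellipse and its perimeter equals `4(a + c)√(2a/c − 1)`. -/
theorem type2_6periodic (a b c : ℝ) (hab : a > b) (hb : b > 0)
    (hex : 3*a^2 > 4*b^2) (hc : c = Real.sqrt (a^2 - b^2)) (hca : 2*c > a) :
    let P1 : ℝ × ℝ := (0, b)
    let P4 : ℝ × ℝ := (0, -b)
    let P2 : ℝ × ℝ := (-(a^(3/2 : ℝ) * Real.sqrt (2*c - a)/c), (c - a)*b/c)
    let P3 : ℝ × ℝ := (-P2.1, -P2.2)
    let P5 : ℝ × ℝ := (-(a^(3/2 : ℝ) * Real.sqrt (2*c - a)/c), -((c - a)*b/c))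
    let P6 : ℝ × ℝ := (-P5.1, -P5.2)
    let onE : ℝ × ℝ → Prop := fun p => (p.1/a)^2 + (p.2/b)^2 = 1
    (onE P1 ∧ onE P2 ∧ onE P3 ∧ onE P4 ∧ onE P5 ∧ onE P6) ∧
    edist' P1 P2 + edist' P2 P3 + edist' P3 P4 + edist' P4 P5 +
      edist' P5 P6 + edist' P6 P1 = 4*(a + c)*Real.sqrt (2*a/c - 1) := by
  have ha : 0 < a := lt_trans hb hab
  have hb2 : (0:ℝ) < a^2 - b^2 := by nlinarith
  have hc2 : c^2 = a^2 - b^2 := by rw [hc]; exact Real.sq_sqrt hb2.le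
  have hcpos : 0 < c := by rw [hc]; exact Real.sqrt_pos.mpr hb2
  have h2ca : 0 < 2*c - a := by linarith
  have hca' : c < a := by nlinarith
  have hcne : c ≠ 0 := hcpos.ne'
  have hane : a ≠ 0 := ha.ne'
  have hbne : b ≠ 0 := hb.ne'
  have hA : (a^((3:ℝ)/2))^2 = a^3 := by
    rw [sq, ← Real.rpow_add ha]
    norm_num
  have hS : (Real.sqrt (2*c - a))^2 = 2*c - a := Real.sq_sqrt h2ca.le
  intro P1 P4 P2 P3 P5 P6 onE
  set X : ℝ := a^(3/2 : ℝ) * Real.sqrt (2*c - a)/c with hXdef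
  set Y : ℝ := (c - a)*b/c with hYdef
  have hX2 : X^2 = a^3 * (2*c - a)/c^2 := by
    rw [hXdef, div_pow, mul_pow, hA, hS]
  have hT : Real.sqrt ((2*a - c)/c) = Real.sqrt (2*a/c - 1) := by
    congr 1
    field_simp
  set T : ℝ := Real.sqrt (2*a/c - 1) with hTdef
  -- side lengths
  have e12 : edist' (0, b) (-X, Y) = a * T := by
    unfold edist'
    have h1 : ((0:ℝ) - -X)^2 + (b - Y)^2 = a^2 * ((2*a - c)/c) := by
      have : ((0:ℝ) - -X)^2 + (b - Y)^2 = X^2 + (b - Y)^2 := by ring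
      rw [this, hX2, hYdef]
      field_simp
      linear_combination (a^2) * hc2
    rw [show (((0:ℝ), b).1 - (-X, Y).1)^2 + (((0:ℝ), b).2 - (-X, Y).2)^2
          = ((0:ℝ) - -X)^2 + (b - Y)^2 from rfl, h1,
        Real.sqrt_mul (sq_nonneg a), Real.sqrt_sq ha.le, hT]
  have e23 : edist' (-X, Y) (X, -Y) = 2*c * T := by
    unfold edist'
    have h1 : (-X - X)^2 + (Y - -Y)^2 = (2*c)^2 * ((2*a - c)/c) := by
      have : (-X - X)^2 + (Y - -Y)^2 = 4*X^2 + 4*Y^2 := by ring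
      rw [this, hX2, hYdef]
      field_simp
      linear_combination (4*(c-a)^2) * hc2
    rw [show ((-X, Y).1 - (X, -Y).1)^2 + ((-X, Y).2 - (X, -Y).2)^2
          = (-X - X)^2 + (Y - -Y)^2 from rfl, h1,
        Real.sqrt_mul (sq_nonneg (2*c)), Real.sqrt_sq (by linarith), hT]
  have e34 : edist' (X, -Y) (0, -b) = a * T := by
    unfold edist'
    have h1 : (X - 0)^2 + (-Y - -b)^2 = a^2 * ((2*a - c)/c) := by
      have : (X - 0)^2 + (-Y - -b)^2 = X^2 + (b - Y)^2 := by ring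
      rw [this, hX2, hYdef]
      field_simp
      linear_combination (a^2) * hc2
    rw [show ((X, -Y).1 - ((0:ℝ), -b).1)^2 + ((X, -Y).2 - ((0:ℝ), -b).2)^2
          = (X - 0)^2 + (-Y - -b)^2 from rfl, h1,
        Real.sqrt_mul (sq_nonneg a), Real.sqrt_sq ha.le, hT]
  have e45 : edist' (0, -b) (-X, -Y) = a * T := by
    unfold edist'
    have h1 : ((0:ℝ) - -X)^2 + (-b - -Y)^2 = a^2 * ((2*a - c)/c) := by
      have : ((0:ℝ) - -X)^2 + (-b - -Y)^2 = X^2 + (b - Y)^2 := by ring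
      rw [this, hX2, hYdef]
      field_simp
      linear_combination (a^2) * hc2
    rw [show (((0:ℝ), -b).1 - (-X, -Y).1)^2 + (((0:ℝ), -b).2 - (-X, -Y).2)^2
          = ((0:ℝ) - -X)^2 + (-b - -Y)^2 from rfl, h1,
        Real.sqrt_mul (sq_nonneg a), Real.sqrt_sq ha.le, hT]
  have e56 : edist' (-X, -Y) (X, Y) = 2*c * T := by
    unfold edist'
    have h1 : (-X - X)^2 + (-Y - Y)^2 = (2*c)^2 * ((2*a - c)/c) := by
      have : (-X - X)^2 + (-Y - Y)^2 = 4*X^2 + 4*Y^2 := by ring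
      rw [this, hX2, hYdef]
      field_simp
      linear_combination (4*(c-a)^2) * hc2
    rw [show ((-X, -Y).1 - (X, Y).1)^2 + ((-X, -Y).2 - (X, Y).2)^2
          = (-X - X)^2 + (-Y - Y)^2 from rfl, h1,
        Real.sqrt_mul (sq_nonneg (2*c)), Real.sqrt_sq (by linarith), hT]
  have e61 : edist' (X, Y) (0, b) = a * T := by
    unfold edist'
    have h1 : (X - 0)^2 + (Y - b)^2 = a^2 * ((2*a - c)/c) := by
      have : (X - 0)^2 + (Y - b)^2 = X^2 + (b - Y)^2 := by ring
      rw [this, hX2, hYdef]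
      field_simp
      linear_combination (a^2) * hc2
    rw [show ((X, Y).1 - ((0:ℝ), b).1)^2 + ((X, Y).2 - ((0:ℝ), b).2)^2
          = (X - 0)^2 + (Y - b)^2 from rfl, h1,
        Real.sqrt_mul (sq_nonneg a), Real.sqrt_sq ha.le, hT]
  have honE2 : onE (-X, Y) := by
    show ((-X)/a)^2 + (Y/b)^2 = 1
    have h1 : ((-X)/a)^2 = X^2/a^2 := by ring
    rw [h1, hX2, hYdef]
    field_simp
    ring
  constructor
  · refine ⟨?_, honE2, ?_, ?_, ?_, ?_⟩
    · show ((0:ℝ)/a)^2 + (b/b)^2 = 1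
      field_simp
      ring
    · show (-(-X, Y).1/a)^2 + (-(-X, Y).2/b)^2 = 1
      have := honE2
      show (-(-X)/a)^2 + (-Y/b)^2 = 1
      have h1 : (-(-X)/a)^2 + (-Y/b)^2 = ((-X)/a)^2 + (Y/b)^2 := by ring
      rw [h1]; exact honE2
    · show ((0:ℝ)/a)^2 + ((-b)/b)^2 = 1
      field_simp
      ring
    · show ((-X)/a)^2 + ((-Y)/b)^2 = 1
      have h1 : ((-X)/a)^2 + ((-Y)/b)^2 = ((-X)/a)^2 + (Y/b)^2 := by ring
      rw [h1]; exact honE2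
    · show (-(-X, -Y).1/a)^2 + (-(-X, -Y).2/b)^2 = 1
      show (-(-X)/a)^2 + (-(-Y)/b)^2 = 1
      have h1 : (-(-X)/a)^2 + (-(-Y)/b)^2 = ((-X)/a)^2 + (Y/b)^2 := by ring
      rw [h1]; exact honE2
  · have hP3 : P3 = (X, -Y) := by show ((-(-X), -Y) : ℝ × ℝ) = (X, -Y); rw [neg_neg]
    have hP6 : P6 = (X, Y) := by show ((-(-X), -(-Y)) : ℝ × ℝ) = (X, Y); rw [neg_neg, neg_neg]
    rw [show P1 = ((0:ℝ), b) from rfl, show P2 = (-X, Y) from rfl,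
        show P4 = ((0:ℝ), -b) from rfl, show P5 = (-X, -Y) from rfl, hP3, hP6]
    rw [e12, e23, e34, e45, e56, e61]
    ring
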